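/- Let W ∈ ℝ^{n×n} and U ∈ ℝ^{d×d} be symmetric, B ∈ ℝ^{n×d}, and let X ∈ 𝕂_{n×d} be a clustering matrix. Let Ŵ = [[W, B],[Bᵀ, U]] ∈ ℝ^{(n+d)×(n+d)}. Then the d-cut value with respect to Ŵ of the clustering encoded by the canonical extension [X; I_d] equals Vol(Ŵ) − Tr(U) + V(X), where Vol(Ŵ) is the sum of all entries of Ŵ and V(X) = −Tr(Xᵀ·W·X + 2·Xᵀ·B). -/

import Mathlib

open Matrix BigOperators

/-- A clustering matrix: every row is a standard basis vector of `ℝᵈ`. -/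
def IsClusteringMatrix {ι : Type*} {d : ℕ} (X : Matrix ι (Fin d) ℝ) : Prop :=
  ∀ i, ∃ j, ∀ k, X i k = if k = j then 1 else 0

/-- The `k`-th cluster encoded by a clustering matrix: `c_k = {i : Z i k = 1}`. -/
noncomputable def clusterOf {ι : Type*} {d : ℕ} [Fintype ι]
    (Z : Matrix ι (Fin d) ℝ) (k : Fin d) : Finset ι :=
  Finset.univ.filter fun i => Z i k = 1

/-- The d-cut value `C_A(c_1,…,c_d) = Σ_{k≠l} Σ_{i∈c_k} Σ_{j∈c_l} A i j`. -/
noncomputable def cutValue {ι : Type*} {d : ℕ} [Fintype ι]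
    (A : Matrix ι ι ℝ) (c : Fin d → Finset ι) : ℝ :=
  ∑ k : Fin d, ∑ l : Fin d, if l = k then 0 else ∑ i ∈ c k, ∑ j ∈ c l, A i j

/-- Energy function `V(Y) = -Tr(Yᵀ·W·Y + 2·Yᵀ·B)`. -/
noncomputable def energy {n d : ℕ} (W : Matrix (Fin n) (Fin n) ℝ)
    (B Y : Matrix (Fin n) (Fin d) ℝ) : ℝ :=
  -(Yᵀ * W * Y + (2 : ℝ) • (Yᵀ * B)).trace

lemma clustering_entries {ι : Type*} {d : ℕ} {Z : Matrix ι (Fin d) ℝ}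
    (hZ : IsClusteringMatrix Z) (i : ι) (k : Fin d) : Z i k = 0 ∨ Z i k = 1 := by
  obtain ⟨j, hj⟩ := hZ i
  rw [hj]; split <;> simp

lemma clustering_row_sum {ι : Type*} {d : ℕ} {Z : Matrix ι (Fin d) ℝ}
    (hZ : IsClusteringMatrix Z) (i : ι) : ∑ k, Z i k = 1 := by
  obtain ⟨j, hj⟩ := hZ i
  simp [hj]

lemma sum_cluster {ι : Type*} {d : ℕ} [Fintype ι] {Z : Matrix ι (Fin d) ℝ}
    (hZ : IsClusteringMatrix Z) (k : Fin d) (f : ι → ℝ) :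
    ∑ i ∈ clusterOf Z k, f i = ∑ i, Z i k * f i := by
  rw [clusterOf, Finset.sum_filter]
  refine Finset.sum_congr rfl fun i _ => ?_
  rcases clustering_entries hZ i k with h | h <;> simp [h]

lemma cutValue_eq {ι : Type*} {d : ℕ} [Fintype ι] (A : Matrix ι ι ℝ)
    {Z : Matrix ι (Fin d) ℝ} (hZ : IsClusteringMatrix Z) :
    cutValue A (clusterOf Z) = (∑ i, ∑ j, A i j) - (Zᵀ * A * Z).trace := by
  have h1 : ∀ k l : Fin d, (Zᵀ * A * Z) k l = ∑ i, ∑ j, Z i k * A i j * Z j l := by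
    intro k l
    simp only [Matrix.mul_apply, transpose_apply, Finset.sum_mul]
    exact Finset.sum_comm
  have h2 : ∀ i j : ι, ∑ k : Fin d, ∑ l : Fin d, Z i k * A i j * Z j l = A i j := by
    intro i j
    calc ∑ k : Fin d, ∑ l : Fin d, Z i k * A i j * Z j l
        = ∑ k : Fin d, Z i k * A i j * ∑ l, Z j l := by
          refine Finset.sum_congr rfl fun k _ => ?_
          rw [Finset.mul_sum]
      _ = (∑ k, Z i k) * A i j := by
          rw [clustering_row_sum hZ, Finset.sum_mul]
          simp
      _ = A i j := by rw [clustering_row_sum hZ, one_mul]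
  have hS : ∀ k l : Fin d, (∑ i ∈ clusterOf Z k, ∑ j ∈ clusterOf Z l, A i j)
      = (Zᵀ * A * Z) k l := by
    intro k l
    rw [sum_cluster hZ, h1]
    refine Finset.sum_congr rfl fun i _ => ?_
    rw [sum_cluster hZ, Finset.mul_sum]
    exact Finset.sum_congr rfl fun j _ => by ring
  have key : ∑ k, ∑ l, (Zᵀ * A * Z) k l = ∑ i, ∑ j, A i j := by
    calc ∑ k, ∑ l, (Zᵀ * A * Z) k l
        = ∑ kl : Fin d × Fin d, ∑ ij : ι × ι, Z ij.1 kl.1 * A ij.1 ij.2 * Z ij.2 kl.2 := by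
          simp only [Fintype.sum_prod_type, h1]
      _ = ∑ ij : ι × ι, ∑ kl : Fin d × Fin d, Z ij.1 kl.1 * A ij.1 ij.2 * Z ij.2 kl.2 :=
          Finset.sum_comm
      _ = ∑ i, ∑ j, A i j := by
          simp only [Fintype.sum_prod_type]
          exact Finset.sum_congr rfl fun i _ => Finset.sum_congr rfl fun j _ => h2 i j
  unfold cutValue
  simp only [hS]
  have hsplit : ∀ k l : Fin d, (if l = k then 0 else (Zᵀ * A * Z) k l)
      = (Zᵀ * A * Z) k l - (if l = k then (Zᵀ * A * Z) k l else 0) := by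
    intro k l; split <;> ring
  simp only [hsplit, Finset.sum_sub_distrib, key, Finset.sum_ite_eq', Finset.mem_univ, if_true]
  rfl

lemma extended_is_clustering {n d : ℕ} {X : Matrix (Fin n) (Fin d) ℝ}
    (hX : IsClusteringMatrix X) : IsClusteringMatrix (Matrix.fromRows X (1 : Matrix (Fin d) (Fin d) ℝ)) := by
  rintro (i | j)
  · obtain ⟨j, hj⟩ := hX i
    exact ⟨j, fun k => by simpa [Matrix.fromRows_apply_inl] using hj k⟩
  · exact ⟨j, fun k => by simp [Matrix.fromRows_apply_inr, Matrix.one_apply, eq_comm]⟩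

/-- The cut value of the clustering encoded by the canonical extension `[X; I_d]`
with respect to `Ŵ = [[W, B], [Bᵀ, U]]` equals `Vol(Ŵ) − Tr(U) + V(X)`. -/
theorem extended_cut_eq_vol_sub_trace_add_energy {n d : ℕ}
    (W : Matrix (Fin n) (Fin n) ℝ) (hW : W.IsSymm)
    (U : Matrix (Fin d) (Fin d) ℝ) (hU : U.IsSymm)
    (B X : Matrix (Fin n) (Fin d) ℝ) (hX : IsClusteringMatrix X) :
    cutValue (Matrix.fromBlocks W B Bᵀ U) (clusterOf (Matrix.fromRows X 1)) =
      (∑ i, ∑ j, Matrix.fromBlocks W B Bᵀ U i j) - U.trace + energy W B X := by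
  rw [cutValue_eq _ (extended_is_clustering hX)]
  have hT : (Matrix.fromRows X (1 : Matrix (Fin d) (Fin d) ℝ))ᵀ * Matrix.fromBlocks W B Bᵀ U *
      Matrix.fromRows X (1 : Matrix (Fin d) (Fin d) ℝ) = Xᵀ * W * X + Xᵀ * B + (Bᵀ * X + U) := by
    rw [transpose_fromRows, transpose_one, fromCols_mul_fromBlocks,
      fromCols_mul_fromRows]
    simp only [Matrix.one_mul, Matrix.mul_one, Matrix.add_mul]
    abel
  rw [hT]
  have htr : (Bᵀ * X).trace = (Xᵀ * B).trace := by
    rw [← Matrix.trace_transpose (Bᵀ * X), Matrix.transpose_mul, Matrix.transpose_transpose]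
  simp only [Matrix.trace_add, energy, Matrix.trace_smul, htr, smul_eq_mul]
  ring
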